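/- At every point of U, α satisfies the Riccati-type equation along forward characteristics: α_t + c·α_x = k₁·( k₂·(3α + β) + α·β − α² ) (Theorem 1.1, equation for α). -/

import Mathlib

lemma pd_hasFDerivAt (f : ℝ × ℝ → ℝ) (pt : ℝ × ℝ) (hf : ContDiffAt ℝ 2 f pt) (v : ℝ × ℝ) :
    HasFDerivAt (fun q => fderiv ℝ f q v) ((fderiv ℝ (fderiv ℝ f) pt).flip v) pt := by
  have h1 : ContDiffAt ℝ 1 (fderiv ℝ f) pt := hf.fderiv_right (by norm_num)
  have h2 : DifferentiableAt ℝ (fderiv ℝ f) pt := h1.differentiableAt (by norm_num)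
  have h3 := h2.hasFDerivAt.clm_apply (hasFDerivAt_const v pt)
  simpa using h3



open Real

/-- Partial derivative with respect to `t` (the first coordinate). -/
noncomputable def pdt (f : ℝ × ℝ → ℝ) (pt : ℝ × ℝ) : ℝ := fderiv ℝ f pt (1, 0)

/-- Partial derivative with respect to `x` (the second coordinate). -/
noncomputable def pdx (f : ℝ × ℝ → ℝ) (pt : ℝ × ℝ) : ℝ := fderiv ℝ f pt (0, 1)

set_option maxHeartbeats 2000000 in
/-- Theorem 1.1, equation for `α`:
`α′ = α_t + c·α_x = k₁·(k₂·(3α + β) + α·β − α²)` on `U`. -/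
theorem stmt_3
    (γ Kc : ℝ) (hγ : 1 < γ) (hKc : 0 < Kc)
    (U : Set (ℝ × ℝ)) (hU : IsOpen U)
    (u z m : ℝ × ℝ → ℝ)
    (hu : ContDiffOn ℝ 2 u U) (hz : ContDiffOn ℝ 2 z U) (hm : ContDiffOn ℝ 2 m U)
    (hzpos : ∀ pt ∈ U, 0 < z pt) (hmpos : ∀ pt ∈ U, 0 < m pt)
    (c p : ℝ × ℝ → ℝ)
    (hc : c = fun pt => Kc * m pt * z pt ^ ((γ + 1) / (γ - 1)))
    (hp : p = fun pt => ((γ - 1) / (2 * γ) * Kc) * (m pt) ^ 2 * z pt ^ (2 * γ / (γ - 1)))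
    (heq1 : ∀ pt ∈ U, pdt z pt + (c pt / m pt) * pdx u pt = 0)
    (heq2 : ∀ pt ∈ U, pdt u pt + m pt * c pt * pdx z pt + 2 * (p pt / m pt) * pdx m pt = 0)
    (heq3 : ∀ pt ∈ U, pdt m pt = 0)
    (α β : ℝ × ℝ → ℝ)
    (hα : α = fun pt => pdx u pt + m pt * pdx z pt + ((γ - 1) / γ) * pdx m pt * z pt)
    (hβ : β = fun pt => pdx u pt - m pt * pdx z pt - ((γ - 1) / γ) * pdx m pt * z pt)
    (k1 k2 : ℝ × ℝ → ℝ)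
    (hk1 : k1 = fun pt => ((γ + 1) * Kc / (2 * (γ - 1))) * z pt ^ (2 / (γ - 1)))
    (hk2 : k2 = fun pt => ((γ - 1) / (γ * (γ + 1))) * z pt * pdx m pt)
 :
    ∀ pt ∈ U, pdt α pt + c pt * pdx α pt
      = k1 pt * (k2 pt * (3 * α pt + β pt) + α pt * β pt - (α pt) ^ 2) := by
  subst hc hp hα hβ hk1 hk2
  have hγ1 : γ - 1 ≠ 0 := by intro h; linarith
  have hγ0 : γ ≠ 0 := by intro h; linarith
  simp only [pdt, pdx] at heq1 heq2 heq3 ⊢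
  -- division-free versions of the PDEs
  have heq1' : ∀ q ∈ U, fderiv ℝ z q (1,0)
      + Kc * z q ^ ((γ + 1) / (γ - 1)) * fderiv ℝ u q (0,1) = 0 := by
    intro q hq
    have h := heq1 q hq
    have hm0 : m q ≠ 0 := ne_of_gt (hmpos q hq)
    field_simp at h
    have hprod : m q * (fderiv ℝ z q (1,0)
        + Kc * z q ^ ((γ + 1) / (γ - 1)) * fderiv ℝ u q (0,1)) = 0 := by linear_combination m q * h
    exact (mul_eq_zero.mp hprod).resolve_left hm0
  have heq2' : ∀ q ∈ U, γ * fderiv ℝ u q (1,0)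
      + γ * Kc * m q ^ 2 * z q ^ ((γ + 1) / (γ - 1)) * fderiv ℝ z q (0,1)
      + (γ - 1) * Kc * m q * z q ^ (2 * γ / (γ - 1)) * fderiv ℝ m q (0,1) = 0 := by
    intro q hq
    have h := heq2 q hq
    have hm0 : m q ≠ 0 := ne_of_gt (hmpos q hq)
    field_simp at h
    rw [mul_comm γ 2] at h
    have hprod : m q * (γ * fderiv ℝ u q (1,0)
        + γ * Kc * m q ^ 2 * z q ^ ((γ + 1) / (γ - 1)) * fderiv ℝ z q (0,1)
        + (γ - 1) * Kc * m q * z q ^ (2 * γ / (γ - 1)) * fderiv ℝ m q (0,1)) = 0 := by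
      linear_combination m q * h
    exact (mul_eq_zero.mp hprod).resolve_left hm0
  intro pt hpt
  have hmem : U ∈ nhds pt := hU.mem_nhds hpt
  have hz0 : (0:ℝ) < z pt := hzpos pt hpt
  have hm0 : (0:ℝ) < m pt := hmpos pt hpt
  have hu2 : ContDiffAt ℝ 2 u pt := hu.contDiffAt hmem
  have hz2 : ContDiffAt ℝ 2 z pt := hz.contDiffAt hmem
  have hm2 : ContDiffAt ℝ 2 m pt := hm.contDiffAt hmem
  have hud : HasFDerivAt u (fderiv ℝ u pt) pt :=
    (hu2.differentiableAt (by norm_num)).hasFDerivAt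
  have hzd : HasFDerivAt z (fderiv ℝ z pt) pt :=
    (hz2.differentiableAt (by norm_num)).hasFDerivAt
  have hmd : HasFDerivAt m (fderiv ℝ m pt) pt :=
    (hm2.differentiableAt (by norm_num)).hasFDerivAt
  have hux := pd_hasFDerivAt u pt hu2 (0,1)
  have hut := pd_hasFDerivAt u pt hu2 (1,0)
  have hzx := pd_hasFDerivAt z pt hz2 (0,1)
  have hzt := pd_hasFDerivAt z pt hz2 (1,0)
  have hmx := pd_hasFDerivAt m pt hm2 (0,1)
  have hmt := pd_hasFDerivAt m pt hm2 (1,0)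
  have hzr1 : HasFDerivAt (fun q => z q ^ ((γ + 1) / (γ - 1)))
      ((((γ + 1) / (γ - 1)) * z pt ^ ((γ + 1) / (γ - 1) - 1)) • fderiv ℝ z pt) pt :=
    hzd.rpow_const (Or.inl (ne_of_gt hz0))
  have hzr2 : HasFDerivAt (fun q => z q ^ (2 * γ / (γ - 1)))
      (((2 * γ / (γ - 1)) * z pt ^ (2 * γ / (γ - 1) - 1)) • fderiv ℝ z pt) pt :=
    hzd.rpow_const (Or.inl (ne_of_gt hz0))
  have hmsq : HasFDerivAt (fun q => m q ^ 2) (m pt • fderiv ℝ m pt + m pt • fderiv ℝ m pt) pt := by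
    have := hmd.mul hmd
    simp only [← pow_two] at this
    exact this
  -- symmetry of second derivatives
  have hsymu := hu2.isSymmSndFDerivAt (by simp [minSmoothness_of_isRCLikeNormedField])
  have hsymz := hz2.isSymmSndFDerivAt (by simp [minSmoothness_of_isRCLikeNormedField])
  have hsymm := hm2.isSymmSndFDerivAt (by simp [minSmoothness_of_isRCLikeNormedField])
  -- eq3 differentiated
  have hG3z : fderiv ℝ (fun q => fderiv ℝ m q ((1:ℝ),(0:ℝ))) pt = 0 := by
    have hev : (fun q => fderiv ℝ m q ((1:ℝ),(0:ℝ))) =ᶠ[nhds pt] (fun _ => (0:ℝ)) :=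
      Filter.eventuallyEq_of_mem hmem heq3
    rw [hev.fderiv_eq]; exact fderiv_const_apply 0
  have e3 : fderiv ℝ (fderiv ℝ m) pt (0,1) (1,0) = 0 := by
    have h := hmt.fderiv
    rw [hG3z] at h
    have h2 := congrArg (fun (L : (ℝ×ℝ) →L[ℝ] ℝ) => L ((0:ℝ),(1:ℝ))) h.symm
    simpa using h2
  -- eq1 differentiated
  have hG1d := hzt.add (((hasFDerivAt_const Kc pt).mul hzr1).mul hux)
  have hG1z : fderiv ℝ (fun q => fderiv ℝ z q ((1:ℝ),(0:ℝ))
      + Kc * z q ^ ((γ + 1) / (γ - 1)) * fderiv ℝ u q ((0:ℝ),(1:ℝ))) pt = 0 := by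
    have hev : (fun q => fderiv ℝ z q ((1:ℝ),(0:ℝ))
        + Kc * z q ^ ((γ + 1) / (γ - 1)) * fderiv ℝ u q ((0:ℝ),(1:ℝ))) =ᶠ[nhds pt] (fun _ => (0:ℝ)) :=
      Filter.eventuallyEq_of_mem hmem heq1'
    rw [hev.fderiv_eq]; exact fderiv_const_apply 0
  have e1 : fderiv ℝ (fderiv ℝ z) pt (0,1) (1,0)
      + (Kc * (((γ + 1) / (γ - 1)) * z pt ^ ((γ + 1) / (γ - 1) - 1)) * fderiv ℝ z pt (0,1))
          * fderiv ℝ u pt (0,1)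
      + Kc * z pt ^ ((γ + 1) / (γ - 1)) * fderiv ℝ (fderiv ℝ u) pt (0,1) (0,1) = 0 := by
    have h := hG1d.fderiv
    simp only [Pi.add_def, Pi.mul_def] at h
    rw [hG1z] at h
    have h2 := congrArg (fun (L : (ℝ×ℝ) →L[ℝ] ℝ) => L ((0:ℝ),(1:ℝ))) h.symm
    simp at h2
    linarith [h2]
  -- eq2 differentiated
  have hG2d := (((hasFDerivAt_const γ pt).mul hut).add
      ((((hasFDerivAt_const (γ * Kc) pt).mul hmsq).mul hzr1).mul hzx)).add
      ((((hasFDerivAt_const ((γ - 1) * Kc) pt).mul hmd).mul hzr2).mul hmx)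
  have hG2z : fderiv ℝ (fun q => γ * fderiv ℝ u q ((1:ℝ),(0:ℝ))
      + γ * Kc * m q ^ 2 * z q ^ ((γ + 1) / (γ - 1)) * fderiv ℝ z q ((0:ℝ),(1:ℝ))
      + (γ - 1) * Kc * m q * z q ^ (2 * γ / (γ - 1)) * fderiv ℝ m q ((0:ℝ),(1:ℝ))) pt = 0 := by
    have hev : (fun q => γ * fderiv ℝ u q ((1:ℝ),(0:ℝ))
        + γ * Kc * m q ^ 2 * z q ^ ((γ + 1) / (γ - 1)) * fderiv ℝ z q ((0:ℝ),(1:ℝ))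
        + (γ - 1) * Kc * m q * z q ^ (2 * γ / (γ - 1)) * fderiv ℝ m q ((0:ℝ),(1:ℝ)))
        =ᶠ[nhds pt] (fun _ => (0:ℝ)) :=
      Filter.eventuallyEq_of_mem hmem heq2'
    rw [hev.fderiv_eq]; exact fderiv_const_apply 0
  have e2 : γ * fderiv ℝ (fderiv ℝ u) pt (0,1) (1,0)
      + γ * Kc * (2 * m pt * fderiv ℝ m pt (0,1)) * z pt ^ ((γ + 1) / (γ - 1)) * fderiv ℝ z pt (0,1)
      + γ * Kc * m pt ^ 2 * (((γ + 1) / (γ - 1)) * z pt ^ ((γ + 1) / (γ - 1) - 1) * fderiv ℝ z pt (0,1)) * fderiv ℝ z pt (0,1)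
      + γ * Kc * m pt ^ 2 * z pt ^ ((γ + 1) / (γ - 1)) * fderiv ℝ (fderiv ℝ z) pt (0,1) (0,1)
      + (γ - 1) * Kc * fderiv ℝ m pt (0,1) * z pt ^ (2 * γ / (γ - 1)) * fderiv ℝ m pt (0,1)
      + (γ - 1) * Kc * m pt * ((2 * γ / (γ - 1)) * z pt ^ (2 * γ / (γ - 1) - 1) * fderiv ℝ z pt (0,1)) * fderiv ℝ m pt (0,1)
      + (γ - 1) * Kc * m pt * z pt ^ (2 * γ / (γ - 1)) * fderiv ℝ (fderiv ℝ m) pt (0,1) (0,1) = 0 := by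
    have h := hG2d.fderiv
    simp only [Pi.add_def, Pi.mul_def] at h
    rw [hG2z] at h
    have h2 := congrArg (fun (L : (ℝ×ℝ) →L[ℝ] ℝ) => L ((0:ℝ),(1:ℝ))) h.symm
    simp at h2
    linear_combination h2
  -- alpha derivative
  have hαd := (hux.add (hmd.mul hzx)).add (((hasFDerivAt_const ((γ-1)/γ) pt).mul hmx).mul hzd)
  simp only [Pi.add_def, Pi.mul_def] at hαd
  rw [hαd.fderiv]
  simp only [ContinuousLinearMap.add_apply, ContinuousLinearMap.coe_smul', Pi.smul_apply,
    ContinuousLinearMap.flip_apply, smul_eq_mul]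
  simp only [ContinuousLinearMap.zero_apply, mul_zero, add_zero]
  -- symmetry rewrites
  rw [hsymu ((1:ℝ),(0:ℝ)) ((0:ℝ),(1:ℝ)), hsymz ((1:ℝ),(0:ℝ)) ((0:ℝ),(1:ℝ)),
      hsymm ((1:ℝ),(0:ℝ)) ((0:ℝ),(1:ℝ)), e3, heq3 pt hpt]
  -- powers in terms of S
  have hzne : z pt ≠ 0 := ne_of_gt hz0
  have hp1 : z pt ^ ((γ + 1) / (γ - 1)) = z pt ^ (2 / (γ - 1)) * z pt := by
    rw [show (γ + 1) / (γ - 1) = 2 / (γ - 1) + 1 by field_simp; ring, rpow_add_one hzne]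
  have hp2 : z pt ^ ((γ + 1) / (γ - 1) - 1) = z pt ^ (2 / (γ - 1)) := by
    rw [show (γ + 1) / (γ - 1) - 1 = 2 / (γ - 1) by field_simp; ring]
  have hp3 : z pt ^ (2 * γ / (γ - 1)) = z pt ^ (2 / (γ - 1)) * z pt * z pt := by
    rw [show 2 * γ / (γ - 1) = 2 / (γ - 1) + 1 + 1 by field_simp; ring, rpow_add_one hzne,
      rpow_add_one hzne]
  have hp4 : z pt ^ (2 * γ / (γ - 1) - 1) = z pt ^ (2 / (γ - 1)) * z pt := by
    rw [show 2 * γ / (γ - 1) - 1 = 2 / (γ - 1) + 1 by field_simp; ring, rpow_add_one hzne]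
  have ht1 := heq1' pt hpt
  simp only [hp1, hp2, hp3, hp4] at e1 e2 ht1 ⊢
  -- abbreviations
  set S := z pt ^ (2 / (γ - 1)) with hS
  set z0 := z pt with hz0'
  set m0 := m pt with hm0'
  set ux := fderiv ℝ u pt (0,1) with hux'
  set zx := fderiv ℝ z pt (0,1) with hzx'
  set mx := fderiv ℝ m pt (0,1) with hmx'
  set uxx := fderiv ℝ (fderiv ℝ u) pt (0,1) (0,1) with huxx'
  set zxx := fderiv ℝ (fderiv ℝ z) pt (0,1) (0,1) with hzxx'
  set mxx := fderiv ℝ (fderiv ℝ m) pt (0,1) (0,1) with hmxx'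
  set uxt := fderiv ℝ (fderiv ℝ u) pt (0,1) (1,0) with huxt'
  set zxt := fderiv ℝ (fderiv ℝ z) pt (0,1) (1,0) with hzxt'
  set zt := fderiv ℝ z pt (1,0) with hzt'
  -- substitutions
  have hztv : zt = -(Kc * (S * z0) * ux) := by linarith [ht1]
  have hzxt : zxt =
      -((Kc * (((γ + 1) / (γ - 1)) * S) * zx) * ux + Kc * (S * z0) * uxx) := by
    linarith [e1]
  have huxt : uxt =
      -( γ * Kc * (2 * m0 * mx) * (S * z0) * zx
       + γ * Kc * m0 ^ 2 * (((γ + 1) / (γ - 1)) * S * zx) * zx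
       + γ * Kc * m0 ^ 2 * (S * z0) * zxx
       + (γ - 1) * Kc * mx * (S * z0 * z0) * mx
       + (γ - 1) * Kc * m0 * ((2 * γ / (γ - 1)) * (S * z0) * zx) * mx
       + (γ - 1) * Kc * m0 * (S * z0 * z0) * mxx ) / γ := by
    apply (eq_div_iff hγ0).mpr
    linear_combination e2
  rw [huxt, hzxt, hztv]
  have hγp1 : γ + 1 ≠ 0 := by intro h; linarith
  field_simp
  ring
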